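/- For every integer m ≥ 3 there is no interval-filling sequence (x_n) of positive reals whose cardinal function has range exactly {1, m}. That is, if (x_n) is summable, positive, nonincreasing with x_n ≤ ∑_{k>n} x_k for all n, then the range of its cardinal function cannot equal {1, m} for any m ≥ 3. -/

import Mathlib

open Set

/-- The achievement set of a sequence: all subsums. -/
noncomputable def achSet (x : ℕ → ℝ) : Set ℝ :=
  {t | ∃ S : Set ℕ, ∑' n : S, x n = t}

/-- The cardinal function: the number of representations of `t` as a subsum. -/
noncomputable def cardFun (x : ℕ → ℝ) (t : ℝ) : Cardinal :=
  Cardinal.mk {S : Set ℕ // ∑' n : S, x n = t}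

/-- The tail sum `r_k = ∑_{n > k} x n`. -/
noncomputable def tailSum (x : ℕ → ℝ) (k : ℕ) : ℝ := ∑' n, x (k + 1 + n)

/-- Prepending a term to a sequence. -/
def prepend (y : ℝ) (x : ℕ → ℝ) : ℕ → ℝ := fun n =>
  match n with
  | 0 => y
  | Nat.succ m => x m

/- ### Auxiliary lemmas -/

lemma IFaux.tail_succ (x : ℕ → ℝ) (hsum : Summable x) (k : ℕ) :
    tailSum x k = x (k + 1) + tailSum x (k + 1) := by
  have hs : Summable fun n => x (k + 1 + n) :=
    hsum.comp_injective (fun a b h => by omega)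
  rw [tailSum, Summable.tsum_eq_zero_add hs]
  have h1 : x (k + 1 + 0) = x (k + 1) := congrArg x (by omega)
  have h2 : (∑' n, x (k + 1 + (n + 1))) = tailSum x (k + 1) := by
    rw [tailSum]
    exact tsum_congr fun n => congrArg x (by omega)
  rw [h1, h2]

lemma IFaux.tail_eq_Ioi (x : ℕ → ℝ) (k : ℕ) :
    tailSum x k = ∑' n : Set.Ioi k, x n := by
  let e : ℕ ≃ Set.Ioi k :=
    { toFun := fun n => ⟨k + 1 + n, by simp only [Set.mem_Ioi]; omega⟩
      invFun := fun n => n.1 - (k + 1)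
      left_inv := fun n => by show k + 1 + n - (k + 1) = n; omega
      right_inv := fun n => Subtype.ext (by
        have := n.2
        simp only [Set.mem_Ioi] at this
        show k + 1 + (n.1 - (k + 1)) = n.1
        omega) }
  rw [tailSum, ← Equiv.tsum_eq e (fun n : Set.Ioi k => x n)]
  exact tsum_congr fun n => rfl

lemma IFaux.tail_tendsto (x : ℕ → ℝ) :
    Filter.Tendsto (tailSum x) Filter.atTop (nhds 0) := by
  have h := (tendsto_sum_nat_add x).comp (Filter.tendsto_add_atTop_nat 1)
  refine Filter.Tendsto.congr (fun j => ?_) h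
  show (∑' n, x (n + (j + 1))) = tailSum x j
  rw [tailSum]
  exact tsum_congr fun n => congrArg x (by omega)

lemma IFaux.sum_le_tail (x : ℕ → ℝ) (hnn : ∀ n, 0 ≤ x n) (hsum : Summable x) (k : ℕ)
    (S : Set ℕ) (hS : ∀ n ∈ S, k < n) : (∑' n : S, x n) ≤ tailSum x k := by
  rw [IFaux.tail_eq_Ioi, tsum_subtype, tsum_subtype]
  exact Summable.tsum_le_tsum
    (fun n => Set.indicator_le_indicator_of_subset (fun a ha => hS a ha) hnn n)
    (hsum.indicator S) (hsum.indicator _)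

lemma IFaux.sum_insert (x : ℕ → ℝ) (hsum : Summable x) {a : ℕ} {S : Set ℕ} (ha : a ∉ S) :
    (∑' n : ↑(insert a S), x n) = x a + ∑' n : S, x n := by
  rw [Set.insert_eq,
    (hsum.subtype _).tsum_union_disjoint (Set.disjoint_singleton_left.mpr ha) (hsum.subtype _),
    tsum_singleton]

lemma IFaux.sum_empty_of (x : ℕ → ℝ) (hpos : ∀ n, 0 < x n) (hsum : Summable x) {S : Set ℕ}
    (h : (∑' n : S, x n) = 0) : S = ∅ := by
  by_contra hne
  obtain ⟨a, ha⟩ := Set.nonempty_iff_ne_empty.mpr hne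
  have hle : x a ≤ ∑' n : S, x n :=
    Summable.le_tsum (hsum.subtype S) (⟨a, ha⟩ : S) (fun b _ => (hpos _).le)
  rw [h] at hle
  linarith [hpos a]

/- ### The greedy construction -/

noncomputable def IFaux.grd (x : ℕ → ℝ) (k : ℕ) (s : ℝ) : ℕ → ℝ
  | 0 => s
  | i + 1 => IFaux.grd x k s i - (if x (k + 1 + i) ≤ IFaux.grd x k s i then x (k + 1 + i) else 0)

lemma IFaux.grd_inv (x : ℕ → ℝ) (hsum : Summable x)
    (hIF : ∀ n, x n ≤ tailSum x n) (k : ℕ) {s : ℝ} (h0 : 0 ≤ s) (h1 : s ≤ tailSum x k) :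
    ∀ i, 0 ≤ IFaux.grd x k s i ∧ IFaux.grd x k s i ≤ tailSum x (k + i) := by
  intro i
  induction i with
  | zero => exact ⟨h0, by simpa [IFaux.grd] using h1⟩
  | succ i ih =>
    obtain ⟨ih0, ih1⟩ := ih
    have htail : tailSum x (k + i) = x (k + i + 1) + tailSum x (k + i + 1) :=
      IFaux.tail_succ x hsum (k + i)
    have hxx : x (k + 1 + i) = x (k + i + 1) := congrArg x (by omega)
    by_cases hc : x (k + 1 + i) ≤ IFaux.grd x k s i
    · simp only [IFaux.grd, if_pos hc]
      constructor
      · linarith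
      · rw [show k + (i + 1) = k + i + 1 from by omega]
        linarith
    · simp only [IFaux.grd, if_neg hc]
      push_neg at hc
      have h2 := hIF (k + 1 + i)
      constructor
      · linarith
      · rw [show k + (i + 1) = k + 1 + i from by omega]
        linarith

lemma IFaux.grd_partial (x : ℕ → ℝ) (k : ℕ) (s : ℝ) :
    ∀ i, s - IFaux.grd x k s i =
      ∑ j ∈ Finset.range i, (if x (k + 1 + j) ≤ IFaux.grd x k s j then x (k + 1 + j) else 0) := by
  intro i
  induction i with
  | zero => simp [IFaux.grd]
  | succ i ih =>
    rw [Finset.sum_range_succ, ← ih]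
    simp only [IFaux.grd]
    ring

lemma IFaux.exists_rep_tail (x : ℕ → ℝ) (hpos : ∀ n, 0 < x n) (hsum : Summable x)
    (hIF : ∀ n, x n ≤ tailSum x n) (k : ℕ) {s : ℝ} (h0 : 0 ≤ s) (h1 : s ≤ tailSum x k) :
    ∃ S : Set ℕ, (∀ n ∈ S, k < n) ∧ (∑' n : S, x n) = s := by
  classical
  have hxs : Summable fun j => x (k + 1 + j) :=
    hsum.comp_injective (fun a b h => by omega)
  set g : ℕ → ℝ := fun j => if x (k + 1 + j) ≤ IFaux.grd x k s j then x (k + 1 + j) else 0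
    with hg
  have hg0 : ∀ j, 0 ≤ g j := by
    intro j
    by_cases h : x (k + 1 + j) ≤ IFaux.grd x k s j <;> simp [g, h, (hpos _).le]
  have hgle : ∀ j, g j ≤ x (k + 1 + j) := by
    intro j
    by_cases h : x (k + 1 + j) ≤ IFaux.grd x k s j <;> simp [g, h, (hpos _).le]
  have hgsum : Summable g := Summable.of_nonneg_of_le hg0 hgle hxs
  have hginv := IFaux.grd_inv x hsum hIF k h0 h1
  have hgrd0 : Filter.Tendsto (IFaux.grd x k s) Filter.atTop (nhds 0) := by
    have htt : Filter.Tendsto (fun i => tailSum x (k + i)) Filter.atTop (nhds 0) := by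
      have h := (IFaux.tail_tendsto x).comp (Filter.tendsto_add_atTop_nat k)
      exact h.congr fun i => congrArg (tailSum x) (by omega)
    exact tendsto_of_tendsto_of_tendsto_of_le_of_le tendsto_const_nhds htt
      (fun i => (hginv i).1) (fun i => (hginv i).2)
  have hps : Filter.Tendsto (fun i => ∑ j ∈ Finset.range i, g j) Filter.atTop (nhds s) := by
    have h1' : Filter.Tendsto (fun i => s - IFaux.grd x k s i) Filter.atTop (nhds s) := by
      have := (tendsto_const_nhds (x := s) (f := Filter.atTop (α := ℕ))).sub hgrd0
      simpa using this
    exact h1'.congr fun i => IFaux.grd_partial x k s i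
  have htsum : (∑' j, g j) = s := tendsto_nhds_unique hgsum.hasSum.tendsto_sum_nat hps
  refine ⟨(fun j => k + 1 + j) '' {j | x (k + 1 + j) ≤ IFaux.grd x k s j}, ?_, ?_⟩
  · rintro n ⟨j, -, rfl⟩
    show k < k + 1 + j
    omega
  · have hinj : Function.Injective fun j : ℕ => k + 1 + j := add_right_injective (k + 1)
    rw [tsum_image x hinj.injOn,
      tsum_subtype {j | x (k + 1 + j) ≤ IFaux.grd x k s j} (fun j => x (k + 1 + j))]
    refine Eq.trans (tsum_congr fun j => ?_) htsum
    rw [Set.indicator_apply]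
    simp only [Set.mem_setOf_eq, hg]

/- ### Counting representations with restricted indices -/

noncomputable def IFaux.NK (x : ℕ → ℝ) (k : ℕ) (s : ℝ) : Cardinal :=
  Cardinal.mk {S : Set ℕ // (∀ n ∈ S, k ≤ n) ∧ (∑' n : S, x n) = s}

lemma IFaux.cardFun_eq_NK0 (x : ℕ → ℝ) (s : ℝ) : cardFun x s = IFaux.NK x 0 s :=
  Cardinal.mk_congr (Equiv.subtypeEquivRight fun S => by simp)

lemma IFaux.NK_small (x : ℕ → ℝ) (hpos : ∀ n, 0 < x n) (hsum : Summable x) (k : ℕ) (s : ℝ)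
    (hs : ∀ j, j < k → s < x j) : IFaux.NK x 0 s = IFaux.NK x k s := by
  refine Cardinal.mk_congr (Equiv.subtypeEquivRight fun S => ?_)
  constructor
  · rintro ⟨-, h2⟩
    refine ⟨fun n hn => ?_, h2⟩
    by_contra hlt
    push_neg at hlt
    have hxle : x n ≤ ∑' j : S, x j :=
      Summable.le_tsum (hsum.subtype _) (⟨n, hn⟩ : S) (fun b _ => (hpos _).le)
    rw [h2] at hxle
    exact absurd hxle (not_le.mpr (hs n hlt))
  · rintro ⟨-, h2⟩
    exact ⟨fun n _ => Nat.zero_le n, h2⟩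

lemma IFaux.NK_rec (x : ℕ → ℝ) (hsum : Summable x) (k : ℕ) (s : ℝ) :
    IFaux.NK x k s = IFaux.NK x (k + 1) s + IFaux.NK x (k + 1) (s - x k) := by
  classical
  rw [IFaux.NK, IFaux.NK, IFaux.NK, Cardinal.add_def]
  have hdiffmem : ∀ S : Set ℕ, (∀ n ∈ S, k ≤ n) → ∀ n ∈ S \ ({k} : Set ℕ), k + 1 ≤ n := by
    rintro S hS n ⟨hn, hn2⟩
    have := hS n hn
    simp only [Set.mem_singleton_iff] at hn2
    omega
  have hdiffsum : ∀ S : Set ℕ, k ∈ S →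
      (∑' n : ↑(S \ ({k} : Set ℕ)), x n) = (∑' n : S, x n) - x k := by
    intro S hk
    have hins : insert k (S \ ({k} : Set ℕ)) = S := by
      rw [Set.insert_diff_singleton, Set.insert_eq_self.mpr hk]
    have hnm : k ∉ S \ ({k} : Set ℕ) := by simp
    have h2 := IFaux.sum_insert x hsum hnm
    rw [hins] at h2
    linarith
  refine Cardinal.mk_congr (Equiv.ofBijective (fun T =>
    if h : k ∈ T.1 then
      Sum.inr ⟨T.1 \ {k}, hdiffmem T.1 T.2.1, by rw [hdiffsum T.1 h, T.2.2]⟩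
    else
      Sum.inl ⟨T.1, fun n hn => by
        have h1 := T.2.1 n hn
        have h2 : n ≠ k := fun e => h (e ▸ hn)
        omega, T.2.2⟩) ⟨?_, ?_⟩)
  · intro T1 T2 h12
    dsimp only at h12
    apply Subtype.ext
    by_cases h1 : k ∈ T1.1 <;> by_cases h2 : k ∈ T2.1
    · rw [dif_pos h1, dif_pos h2] at h12
      injection h12 with h12'
      have h3 : T1.1 \ {k} = T2.1 \ {k} := congrArg Subtype.val h12' 
      have h4 := congrArg (insert k) h3
      rwa [Set.insert_diff_singleton, Set.insert_diff_singleton,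
        Set.insert_eq_self.mpr h1, Set.insert_eq_self.mpr h2] at h4
    · rw [dif_pos h1, dif_neg h2] at h12
      exact absurd h12 (by simp)
    · rw [dif_neg h1, dif_pos h2] at h12
      exact absurd h12 (by simp)
    · rw [dif_neg h1, dif_neg h2] at h12
      injection h12 with h12'
      have h3 := congrArg Subtype.val h12'
      exact h3
  · rintro (⟨S, hS, hval⟩ | ⟨S, hS, hval⟩)
    · have hk : k ∉ S := fun h => by have := hS k h; omega
      refine ⟨⟨S, fun n hn => by have := hS n hn; omega, hval⟩, ?_⟩
      dsimp only
      rw [dif_neg hk]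
    · have hk : k ∉ S := fun h => by have := hS k h; omega
      have hmem : ∀ n ∈ insert k S, k ≤ n := by
        rintro n hn
        rcases Set.mem_insert_iff.mp hn with rfl | hn'
        · exact le_rfl
        · have := hS n hn'; omega
      have hsum2 : (∑' n : ↑(insert k S), x n) = s := by
        rw [IFaux.sum_insert x hsum hk, hval]
        ring
      refine ⟨⟨insert k S, hmem, hsum2⟩, ?_⟩
      dsimp only
      rw [dif_pos (Set.mem_insert k S)]
      exact congrArg Sum.inr (Subtype.ext
        (show insert k S \ {k} = S from Set.insert_diff_self_of_notMem hk))

lemma IFaux.NK_eq_zero_iff (x : ℕ → ℝ) (k : ℕ) (s : ℝ) :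
    IFaux.NK x k s = 0 ↔ ∀ S : Set ℕ, (∀ n ∈ S, k ≤ n) → (∑' n : S, x n) ≠ s := by
  rw [IFaux.NK, Cardinal.mk_eq_zero_iff, isEmpty_subtype]
  simp [not_and]

/- ### The main theorem -/

theorem stmt3 (x : ℕ → ℝ) (hpos : ∀ n, 0 < x n) (hanti : ∀ n, x (n + 1) ≤ x n)
    (hsum : Summable x) (hIF : ∀ n, x n ≤ tailSum x n) :
    ∀ m : ℕ, 3 ≤ m → cardFun x '' achSet x ≠ {1, (m : Cardinal)} := by
  intro m hm heq
  have hnn : ∀ n, 0 ≤ x n := fun n => (hpos n).le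
  have hxa : Antitone x := antitone_nat_of_succ_le hanti
  have hA : ∀ t, t ∈ achSet x → cardFun x t = 1 ∨ cardFun x t = (m : Cardinal) := by
    intro t ht
    have h1 : cardFun x t ∈ cardFun x '' achSet x := Set.mem_image_of_mem _ ht
    rw [heq] at h1
    simpa using h1
  -- from the range hypothesis, every point with at least two representations has exactly m
  have hmulti : ∀ t, t ∈ achSet x → 2 ≤ cardFun x t → cardFun x t = (m : Cardinal) := by
    intro t ht h2
    rcases hA t ht with h | h
    · exfalso
      rw [h] at h2
      have : ((2 : ℕ) : Cardinal.{0}) ≤ ((1 : ℕ) : Cardinal.{0}) := by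
        simpa using h2
      have := Nat.cast_le.mp this
      omega
    · exact h
  -- each term x K (for small enough K) has exactly m representations
  have hterm : ∀ K : ℕ, cardFun x (x K) = (m : Cardinal) := by
    intro K
    have hmem : x K ∈ achSet x := ⟨{K}, tsum_singleton K x⟩
    obtain ⟨T, hT1, hT2⟩ :=
      IFaux.exists_rep_tail x hpos hsum hIF K (hpos K).le (hIF K)
    have hTne : T ≠ {K} := by
      intro h
      have hkT : K ∈ T := by rw [h]; exact Set.mem_singleton _
      have := hT1 K hkT
      omega
    have h2le : (2 : Cardinal) ≤ cardFun x (x K) := by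
      rw [cardFun, Cardinal.two_le_iff]
      exact ⟨⟨T, hT2⟩, ⟨{K}, tsum_singleton K x⟩, fun h => hTne (congrArg Subtype.val h)⟩
    exact hmulti _ hmem h2le
  -- Step 1: each tail sum equals the corresponding term
  have tail_ge : ∀ k j : ℕ, j < k → x k + tailSum x k ≤ tailSum x j := by
    intro k
    induction k with
    | zero => intro j h; omega
    | succ K ihK =>
      intro j hjK
      have h2 := IFaux.tail_succ x hsum K
      rcases Nat.lt_succ_iff_lt_or_eq.mp hjK with h | h
      · have h1 := ihK j h
        have h3 := hpos K
        linarith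
      · subst h
        exact le_of_eq h2.symm
  have key : ∀ k, tailSum x k = x k := by
    intro k
    induction k using Nat.strong_induction_on with
    | _ k ih =>
    refine le_antisymm ?_ (hIF k)
    have hmain : ∀ᶠ K in Filter.atTop, tailSum x k ≤ x k + x K := by
      filter_upwards [hsum.tendsto_atTop_zero.eventually_lt_const (hpos k)] with K hK
      -- hK : x K < x k
      set s := x k + x K with hs
      have hkK : k ≠ K := by
        intro h
        rw [h] at hK
        exact lt_irrefl _ hK
      have hsmall : ∀ j, j < k → s < x j := by
        intro j hj
        have h1 := tail_ge k j hj
        have h2 := ih j hj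
        have h3 : x K < tailSum x k := lt_of_lt_of_le hK (hIF k)
        linarith
      have hsmall2 : ∀ j, j < k + 1 → x K < x j := by
        intro j hj
        exact lt_of_lt_of_le hK (hxa (Nat.lt_succ_iff.mp hj))
      have e1 : cardFun x s = IFaux.NK x 0 s := IFaux.cardFun_eq_NK0 x s
      have e2 : IFaux.NK x 0 s = IFaux.NK x k s := IFaux.NK_small x hpos hsum k s hsmall
      have e3 : IFaux.NK x k s = IFaux.NK x (k + 1) s + IFaux.NK x (k + 1) (s - x k) :=
        IFaux.NK_rec x hsum k s
      have e4 : s - x k = x K := by rw [hs]; ring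
      have e5 : IFaux.NK x (k + 1) (x K) = IFaux.NK x 0 (x K) :=
        (IFaux.NK_small x hpos hsum (k + 1) (x K) hsmall2).symm
      have e6 : IFaux.NK x 0 (x K) = cardFun x (x K) := (IFaux.cardFun_eq_NK0 x _).symm
      have hmem_s : s ∈ achSet x := by
        refine ⟨insert k {K}, ?_⟩
        rw [IFaux.sum_insert x hsum (by simpa using hkK), tsum_singleton]
      have hcs := hA s hmem_s
      rw [e1, e2, e3, e4, e5, e6, hterm K] at hcs
      have hNK0 : IFaux.NK x (k + 1) s = 0 := by
        rcases hcs with h | h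
        · exfalso
          have hle : (m : Cardinal) ≤ 1 := by
            rw [← h]; exact self_le_add_left _ _
          have : ((m : ℕ) : Cardinal.{0}) ≤ ((1 : ℕ) : Cardinal.{0}) := by simpa using hle
          have := Nat.cast_le.mp this
          omega
        · have hle : IFaux.NK x (k + 1) s ≤ (m : Cardinal) := by
            rw [← h]; exact self_le_add_right _ _
          have hlt : IFaux.NK x (k + 1) s < Cardinal.aleph0 :=
            lt_of_le_of_lt hle (Cardinal.nat_lt_aleph0 m)
          obtain ⟨c, hc⟩ := Cardinal.lt_aleph0.mp hlt
          rw [hc] at h ⊢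
          rw [← Nat.cast_add] at h
          have hcm := Nat.cast_inj.mp h
          have : c = 0 := by omega
          rw [this]
          simp
      by_contra hcon
      push_neg at hcon
      -- then s ≤ tailSum x k, so there is a representation of s beyond k
      obtain ⟨S, hS1, hS2⟩ := IFaux.exists_rep_tail x hpos hsum hIF k
        (by rw [hs]; have := hpos k; have := hpos K; linarith : (0:ℝ) ≤ s) hcon.le
      exact (IFaux.NK_eq_zero_iff x (k + 1) s).mp hNK0 S (fun n hn => hS1 n hn) hS2
    have hlim : Filter.Tendsto (fun K => x k + x K) Filter.atTop (nhds (x k)) := by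
      have := (tendsto_const_nhds (x := x k) (f := Filter.atTop (α := ℕ))).add
        hsum.tendsto_atTop_zero
      simpa using this
    exact ge_of_tendsto hlim hmain
  -- Step 2: any two distinct representations of the same value consist of
  -- one finite and one infinite set
  have pair_half : ∀ A B : Set ℕ, (∑' n : A, x n) = (∑' n : B, x n) →
      ∀ n : ℕ, (∀ j, j < n → (j ∈ A ↔ j ∈ B)) → n ∈ A → n ∉ B → A.Finite ∧ B.Infinite := by
    intro A B hAB n hagree hnA hnB
    have hsplit : ∀ C : Set ℕ, (∑' j : C, x j) =
        (∑' j : ↑(C ∩ Set.Iio n), x j) + ∑' j : ↑(C ∩ Set.Ici n), x j := by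
      intro C
      have hdis : Disjoint (C ∩ Set.Iio n) (C ∩ Set.Ici n) := by
        rw [Set.disjoint_left]
        rintro a ⟨-, ha⟩ ⟨-, hb⟩
        simp only [Set.mem_Iio] at ha
        simp only [Set.mem_Ici] at hb
        omega
      have hu : (C ∩ Set.Iio n) ∪ (C ∩ Set.Ici n) = C := by
        rw [← Set.inter_union_distrib_left, Set.Iio_union_Ici, Set.inter_univ]
      conv_lhs => rw [← hu]
      exact (hsum.subtype _).tsum_union_disjoint hdis (hsum.subtype _)
    have hlow : A ∩ Set.Iio n = B ∩ Set.Iio n := by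
      ext j
      simp only [Set.mem_inter_iff, Set.mem_Iio]
      constructor
      · rintro ⟨h1, h2⟩; exact ⟨(hagree j h2).mp h1, h2⟩
      · rintro ⟨h1, h2⟩; exact ⟨(hagree j h2).mpr h1, h2⟩
    have hhigh : (∑' j : ↑(A ∩ Set.Ici n), x j) = ∑' j : ↑(B ∩ Set.Ici n), x j := by
      have e1 := hsplit A
      have e2 := hsplit B
      rw [hlow] at e1
      linarith
    have hAeq : A ∩ Set.Ici n = insert n (A ∩ Set.Ioi n) := by
      ext j
      simp only [Set.mem_inter_iff, Set.mem_Ici, Set.mem_insert_iff, Set.mem_Ioi]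
      constructor
      · rintro ⟨h1, h2⟩
        rcases eq_or_lt_of_le h2 with h | h
        · left; omega
        · right; exact ⟨h1, h⟩
      · rintro (rfl | ⟨h1, h2⟩)
        · exact ⟨hnA, le_rfl⟩
        · exact ⟨h1, le_of_lt h2⟩
    have hBeq : B ∩ Set.Ici n = B ∩ Set.Ioi n := by
      ext j
      simp only [Set.mem_inter_iff, Set.mem_Ici, Set.mem_Ioi]
      constructor
      · rintro ⟨h1, h2⟩
        rcases eq_or_lt_of_le h2 with h | h
        · exact absurd (h ▸ h1) hnB
        · exact ⟨h1, h⟩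
      · rintro ⟨h1, h2⟩
        exact ⟨h1, le_of_lt h2⟩
    have hsumA : (∑' j : ↑(A ∩ Set.Ici n), x j) = x n + ∑' j : ↑(A ∩ Set.Ioi n), x j := by
      rw [hAeq, IFaux.sum_insert x hsum (by simp)]
    have hBle : (∑' j : ↑(B ∩ Set.Ioi n), x j) ≤ tailSum x n :=
      IFaux.sum_le_tail x hnn hsum n _ (fun a ha => ha.2)
    have hkey := key n
    have hApos : (0:ℝ) ≤ ∑' j : ↑(A ∩ Set.Ioi n), x j := tsum_nonneg (fun j => (hpos _).le)
    rw [hBeq] at hhigh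
    have hAzero : (∑' j : ↑(A ∩ Set.Ioi n), x j) = 0 := by linarith
    have hAempty : A ∩ Set.Ioi n = ∅ := IFaux.sum_empty_of x hpos hsum hAzero
    have hAfin : A.Finite := by
      apply Set.Finite.subset (Set.finite_Iic n)
      intro j hj
      simp only [Set.mem_Iic]
      by_contra h
      push_neg at h
      have : j ∈ A ∩ Set.Ioi n := ⟨hj, h⟩
      rw [hAempty] at this
      exact this
    have hBfull : (∑' j : ↑(B ∩ Set.Ioi n), x j) = x n := by linarith
    have hIoisplit : (Set.Ioi n : Set ℕ) = (B ∩ Set.Ioi n) ∪ (Set.Ioi n \ B) := by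
      ext j
      simp only [Set.mem_Ioi, Set.mem_union, Set.mem_inter_iff, Set.mem_diff]
      tauto
    have hdis2 : Disjoint (B ∩ Set.Ioi n) (Set.Ioi n \ B) := by
      rw [Set.disjoint_left]
      rintro a ⟨h1, -⟩ ⟨-, h2⟩
      exact h2 h1
    have htot : tailSum x n =
        (∑' j : ↑(B ∩ Set.Ioi n), x j) + ∑' j : ↑(Set.Ioi n \ B), x j := by
      rw [IFaux.tail_eq_Ioi]
      conv_lhs => rw [hIoisplit]
      exact (hsum.subtype _).tsum_union_disjoint hdis2 (hsum.subtype _)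
    have hB0 : (∑' j : ↑(Set.Ioi n \ B), x j) = 0 := by linarith
    have hempty2 : Set.Ioi n \ B = ∅ := IFaux.sum_empty_of x hpos hsum hB0
    have hBinf : B.Infinite := by
      apply Set.Infinite.mono (s := Set.Ioi n)
      · intro j hj
        by_contra hB
        have : j ∈ Set.Ioi n \ B := ⟨hj, hB⟩
        rw [hempty2] at this
        exact this
      · exact Set.Ioi_infinite n
    exact ⟨hAfin, hBinf⟩
  have pairlem : ∀ A B : Set ℕ, (∑' n : A, x n) = (∑' n : B, x n) → A ≠ B →
      (A.Finite ∧ B.Infinite) ∨ (B.Finite ∧ A.Infinite) := by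
    intro A B hAB hne
    have hD : {j | ¬(j ∈ A ↔ j ∈ B)}.Nonempty := by
      by_contra h
      rw [Set.not_nonempty_iff_eq_empty] at h
      apply hne
      ext j
      by_contra hj
      have hj' : j ∈ {j | ¬(j ∈ A ↔ j ∈ B)} := by
        simp only [Set.mem_setOf_eq]
        intro hiff
        exact hj (by rw [hiff])
      rw [h] at hj'
      exact hj'
    set n := sInf {j | ¬(j ∈ A ↔ j ∈ B)} with hn
    have hnmem : n ∈ {j | ¬(j ∈ A ↔ j ∈ B)} := Nat.sInf_mem hD
    have hagree : ∀ j, j < n → (j ∈ A ↔ j ∈ B) := by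
      intro j hj
      by_contra h
      have : n ≤ j := Nat.sInf_le h
      omega
    simp only [Set.mem_setOf_eq] at hnmem
    by_cases hA' : n ∈ A
    · have hB' : n ∉ B := fun h => hnmem ⟨fun _ => h, fun _ => hA'⟩
      exact Or.inl (pair_half A B hAB n hagree hA' hB')
    · have hB' : n ∈ B := by tauto
      exact Or.inr (pair_half B A hAB.symm n (fun j hj => (hagree j hj).symm) hB' hA')
  -- conclusion
  obtain ⟨t, htA, htm⟩ : ∃ t ∈ achSet x, cardFun x t = (m : Cardinal) := by
    have hmmem : (m : Cardinal) ∈ cardFun x '' achSet x := by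
      rw [heq]
      exact Set.mem_insert_iff.mpr (Or.inr (Set.mem_singleton _))
    obtain ⟨t, ht1, ht2⟩ := hmmem
    exact ⟨t, ht1, ht2⟩
  have hle2 : cardFun x t ≤ 2 := by
    rw [cardFun]
    rw [show (2 : Cardinal) = Cardinal.mk Prop from Cardinal.mk_Prop.symm]
    apply Cardinal.mk_le_of_injective (f := fun T : {S : Set ℕ // ∑' n : S, x n = t} => T.1.Finite)
    intro T1 T2 h12
    by_contra hne
    have hvne : T1.1 ≠ T2.1 := fun hv => hne (Subtype.ext hv)
    rw [eq_iff_iff] at h12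
    rcases pairlem T1.1 T2.1 (by rw [T1.2, T2.2]) hvne with ⟨hf, hi⟩ | ⟨hf, hi⟩
    · exact hi (h12.mp hf)
    · exact hi (h12.mpr hf)
  rw [htm] at hle2
  have : ((m : ℕ) : Cardinal.{0}) ≤ ((2 : ℕ) : Cardinal.{0}) := by simpa using hle2
  have := Nat.cast_le.mp this
  omega
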